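/- Let ρ, μ, ε, G > 0 and L_f̃ ≥ 0, and let x ∈ X and z ∈ Y. Assume: the map z' ↦ f̃(x,z') is convex on Y and satisfies |f̃(x,z') − f̃(x,z'')| ≤ L_f̃‖z' − z''‖ for all z', z'' ∈ Y; each map z' ↦ g̃_i(x,z') is convex on Y and differentiable at z with gradient ∇_z g̃_i(x,z); there exists ẑ ∈ Y with g̃_i(x,ẑ) ≤ −G for all i; and there exists s ∈ ℝᵐ that is a subgradient of f̃(x,·) at z on Y (i.e., f̃(x,z') ≥ f̃(x,z) + ⟨s, z' − z⟩ for all z' ∈ Y) such that ‖s + 2μ Σ_{i=1}^{l} [g̃_i(x,z)]₊ ∇_z g̃_i(x,z)‖ ≤ ρ⁻¹ε. Then ‖[g̃(x,z)]₊‖ ≤ Σ_{i=1}^{l} [g̃_i(x,z)]₊ ≤ (2μG)⁻¹ D_Y ( ρ⁻¹ε + L_f̃ ). -/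

import Mathlib

noncomputable section

open Set

open scoped RealInnerProductSpace

/-- Euclidean space `ℝⁿ`. -/
abbrev En (n : ℕ) := EuclideanSpace ℝ (Fin n)

/-- Componentwise positive part `[v]₊` of a vector `v ∈ ℝˡ`. -/
def posPart {l : ℕ} (v : En l) : En l := WithLp.toLp 2 (fun i => max (v i) 0)

lemma grad_subgrad {m : ℕ} {Y : Set (En m)} {φ : En m → ℝ}
    (hφ : ConvexOn ℝ Y φ) {g z : En m}
    (hg : HasGradientAt φ g z) (hz : z ∈ Y) {z' : En m} (hz' : z' ∈ Y) :
    φ z + ⟪g, z' - z⟫ ≤ φ z' := by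
  set v := z' - z with hv
  have h1 : HasDerivAt (fun t : ℝ => z + t • v) v 0 := by
    simpa using ((hasDerivAt_id (0:ℝ)).smul_const v).const_add z
  have hFD := hg.hasFDerivAt
  rw [show z = z + (0:ℝ) • v by simp] at hFD
  have hline : HasDerivAt (fun t : ℝ => φ (z + t • v)) ⟪g, v⟫ 0 := by
    have := hFD.comp_hasDerivAt 0 h1
    exact this
  have htend : Filter.Tendsto (slope (fun t : ℝ => φ (z + t • v)) 0) (nhdsWithin 0 (Ioi 0))
      (nhds ⟪g, v⟫) :=
    (hasDerivAt_iff_tendsto_slope.mp hline).mono_left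
      (nhdsWithin_mono _ (fun t ht => ne_of_gt ht))
  have hev : ∀ᶠ t in nhdsWithin (0:ℝ) (Ioi 0),
      slope (fun t : ℝ => φ (z + t • v)) 0 t ≤ φ z' - φ z := by
    filter_upwards [Ioc_mem_nhdsGT_of_mem (by norm_num : (0:ℝ) ∈ Ico (0:ℝ) 1)] with t ht
    have ht0 : 0 < t := ht.1
    have ht1 : t ≤ 1 := ht.2
    have hpt : z + t • v = (1 - t) • z + t • z' := by
      rw [hv]; module
    have hc := hφ.2 hz hz' (by linarith : (0:ℝ) ≤ 1 - t) (le_of_lt ht0) (by ring)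
    rw [← hpt] at hc
    simp only [smul_eq_mul] at hc
    rw [slope_def_field, div_le_iff₀ (by linarith : (0:ℝ) < t - 0)]
    have h0 : z + (0:ℝ) • v = z := by simp
    rw [h0]
    nlinarith
  have : ⟪g, v⟫ ≤ φ z' - φ z := le_of_tendsto htend hev
  linarith

theorem stmt13 {n m l : ℕ} (hn : 0 < n) (hm : 0 < m) (hl : 0 < l)
    (X : Set (En n)) (Y : Set (En m))
    (hXne : X.Nonempty) (hXcpt : IsCompact X)
    (hYne : Y.Nonempty) (hYcpt : IsCompact Y) (hYconv : Convex ℝ Y)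
    (ft : En n × En m → ℝ) (gt : En n × En m → En l)
    (ρ μ ε G Lft : ℝ) (hρ : 0 < ρ) (hμ : 0 < μ) (hε : 0 < ε) (hG : 0 < G) (hLft : 0 ≤ Lft)
    (x : En n) (hx : x ∈ X) (z : En m) (hz : z ∈ Y)
    -- `f̃(x,·)` is convex and `L_f̃`-Lipschitz on Y
    (hftconv : ConvexOn ℝ Y fun z' => ft (x, z'))
    (hftLip : ∀ z' ∈ Y, ∀ z'' ∈ Y, |ft (x, z') - ft (x, z'')| ≤ Lft * ‖z' - z''‖)
    -- each `g̃ᵢ(x,·)` is convex on Y and differentiable at z with gradient `∇_z g̃ᵢ(x,z)`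
    (hgtconv : ∀ i, ConvexOn ℝ Y fun z' => gt (x, z') i)
    (gradg : Fin l → En m)
    (hgrad : ∀ i, HasGradientAt (fun z' => gt (x, z') i) (gradg i) z)
    -- Slater point at x
    (zhat : En m) (hzhat : zhat ∈ Y) (hzhatG : ∀ i, gt (x, zhat) i ≤ -G)
    -- `s` is a subgradient of `f̃(x,·)` at z on Y
    (s : En m)
    (hsub : ∀ z' ∈ Y, ft (x, z) + ⟪s, z' - z⟫ ≤ ft (x, z'))
    (hnorm : ‖s + (2 * μ) • ∑ i, max (gt (x, z) i) 0 • gradg i‖ ≤ ρ⁻¹ * ε) :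
    ‖posPart (gt (x, z))‖ ≤ ∑ i, max (gt (x, z) i) 0 ∧
    ∑ i, max (gt (x, z) i) 0 ≤ (2 * μ * G)⁻¹ * Metric.diam Y * (ρ⁻¹ * ε + Lft) := by
  set a : Fin l → ℝ := fun i => max (gt (x, z) i) 0 with ha
  have ha0 : ∀ i, 0 ≤ a i := fun i => le_max_right _ _
  constructor
  · -- ℓ² ≤ ℓ¹
    rw [EuclideanSpace.norm_eq]
    have h1 : ∑ i, ‖posPart (gt (x, z)) i‖ ^ 2 = ∑ i, (a i) ^ 2 := by
      apply Finset.sum_congr rfl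
      intro i _
      rw [Real.norm_eq_abs, sq_abs]
      simp [_root_.posPart, ha]
    rw [h1]
    calc Real.sqrt (∑ i, (a i) ^ 2) ≤ Real.sqrt ((∑ i, a i) ^ 2) :=
          Real.sqrt_le_sqrt (Finset.sum_sq_le_sq_sum_of_nonneg (fun i _ => ha0 i))
      _ = ∑ i, a i := Real.sqrt_sq (Finset.sum_nonneg fun i _ => ha0 i)
  · set w := zhat - z with hw
    set d := s + (2 * μ) • ∑ i, a i • gradg i with hd
    -- gradient inequalities
    have hgi : ∀ i, a i * ⟪gradg i, w⟫ ≤ -G * a i := by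
      intro i
      have h := grad_subgrad (hgtconv i) (hgrad i) hz hzhat
      have h2 : gt (x, z) i + ⟪gradg i, w⟫ ≤ -G := le_trans h (hzhatG i)
      have h3 : 0 ≤ a i * gt (x, z) i := by
        rcases le_or_gt (gt (x, z) i) 0 with hle | hlt
        · have : a i = 0 := max_eq_right hle
          simp [this]
        · have : a i = gt (x, z) i := max_eq_left hlt.le
          rw [this]; positivity
      nlinarith [mul_le_mul_of_nonneg_left h2 (ha0 i)]
    have hsum : ⟪∑ i, a i • gradg i, w⟫ ≤ -G * ∑ i, a i := by
      rw [sum_inner]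
      calc ∑ i, ⟪a i • gradg i, w⟫ = ∑ i, a i * ⟪gradg i, w⟫ := by
            apply Finset.sum_congr rfl; intro i _; rw [real_inner_smul_left]
        _ ≤ ∑ i, -G * a i := Finset.sum_le_sum fun i _ => hgi i
        _ = -G * ∑ i, a i := by rw [Finset.mul_sum]
    -- ‖w‖ ≤ diam
    have hwD : ‖w‖ ≤ Metric.diam Y := by
      rw [hw, ← dist_eq_norm]
      exact Metric.dist_le_diam_of_mem hYcpt.isBounded hzhat hz
    have hD0 : 0 ≤ Metric.diam Y := Metric.diam_nonneg
    -- subgradient inequality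
    have hsw : ⟪s, w⟫ ≤ Lft * Metric.diam Y := by
      have h1 := hsub zhat hzhat
      have h2 : ft (x, zhat) - ft (x, z) ≤ Lft * ‖zhat - z‖ :=
        le_trans (le_abs_self _) (hftLip zhat hzhat z hz)
      have h3 : Lft * ‖zhat - z‖ ≤ Lft * Metric.diam Y :=
        mul_le_mul_of_nonneg_left hwD hLft
      rw [hw]; linarith
    -- inner product lower bound via hnorm
    have hdw : -(ρ⁻¹ * ε * Metric.diam Y) ≤ ⟪d, w⟫ := by
      have h1 : |⟪d, w⟫| ≤ ‖d‖ * ‖w‖ := abs_real_inner_le_norm d w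
      have h2 : ‖d‖ * ‖w‖ ≤ (ρ⁻¹ * ε) * Metric.diam Y :=
        mul_le_mul hnorm hwD (norm_nonneg _) (by positivity)
      have := neg_abs_le ⟪d, w⟫
      linarith
    have hdw2 : ⟪d, w⟫ = ⟪s, w⟫ + (2 * μ) * ⟪∑ i, a i • gradg i, w⟫ := by
      rw [hd, inner_add_left, real_inner_smul_left]
    have hkey : 2 * μ * G * ∑ i, a i ≤ Metric.diam Y * (ρ⁻¹ * ε + Lft) := by
      have h4 : (2 * μ) * ⟪∑ i, a i • gradg i, w⟫ ≤ (2 * μ) * (-G * ∑ i, a i) :=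
        mul_le_mul_of_nonneg_left hsum (by positivity)
      nlinarith
    rw [show (2 * μ * G)⁻¹ * Metric.diam Y * (ρ⁻¹ * ε + Lft)
        = (Metric.diam Y * (ρ⁻¹ * ε + Lft)) / (2 * μ * G) by ring,
      le_div_iff₀ (by positivity : (0:ℝ) < 2 * μ * G)]
    nlinarith [hkey]
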